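/- Let a : Fin N → ℝ be a monotone nondecreasing assignment of earliest departure times to N trucks. For a partition P of Fin N into nonempty parts, define its waiting cost as Σ over parts p of Σ_{j∈p} (max_{i∈p} a(i) − a(j)). Then for every partition P there exists a partition Q of Fin N into parts that are intervals of consecutive indices, with the same multiset of part cardinalities as P, whose waiting cost is less than or equal to that of P. Hence among all partitions with a given multiset of group sizes, the minimum waiting cost is attained by a partition into consecutive blocks. -/

import Mathlib

/-- Waiting cost of a partition: each truck in a part waits until the
maximum earliest departure time of that part (junk value `0` for the empty
part, which never occurs). -/
noncomputable def waitingCost {N : ℕ} (a : Fin N → ℝ)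
    (P : Finpartition (Finset.univ : Finset (Fin N))) : ℝ :=
  ∑ p ∈ P.parts, ∑ j ∈ p,
    ((if h : p.Nonempty then p.sup' h a else 0) - a j)

private lemma waitingCost_eq {N : ℕ} (a : Fin N → ℝ)
    (P : Finpartition (Finset.univ : Finset (Fin N))) :
    waitingCost a P =
      (∑ p ∈ P.parts, (p.card : ℝ) * (if h : p.Nonempty then p.sup' h a else 0))
        - ∑ j, a j := by
  have hdisj : (P.parts : Set (Finset (Fin N))).PairwiseDisjoint id :=
    P.supIndep.pairwiseDisjoint
  have huniv : ∑ j, a j = ∑ p ∈ P.parts, ∑ j ∈ p, a j := by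
    calc ∑ j, a j = ∑ j ∈ P.parts.biUnion id, a j := by rw [P.biUnion_parts]
    _ = ∑ p ∈ P.parts, ∑ j ∈ id p, a j := Finset.sum_biUnion hdisj
  unfold waitingCost
  rw [huniv, ← Finset.sum_sub_distrib]
  refine Finset.sum_congr rfl fun p hp => ?_
  rw [Finset.sum_sub_distrib, Finset.sum_const, nsmul_eq_mul]

private def cLtF {m : ℕ} (s : Fin m → ℕ) (i : Fin m) : ℕ := ∑ j ∈ Finset.Iio i, s j
private def cLeF {m : ℕ} (s : Fin m → ℕ) (i : Fin m) : ℕ := ∑ j ∈ Finset.Iic i, s j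

private lemma cLeF_eq {m : ℕ} (s : Fin m → ℕ) (i : Fin m) :
    cLeF s i = cLtF s i + s i := by
  rw [cLeF, cLtF, ← Finset.Iio_insert i,
    Finset.sum_insert (by simp), add_comm]

private lemma cLeF_le {m : ℕ} (s : Fin m → ℕ) (i : Fin m) : cLeF s i ≤ ∑ j, s j :=
  Finset.sum_le_sum_of_subset (Finset.subset_univ _)

private lemma cLtF_lt {m : ℕ} (s : Fin m → ℕ) (hs1 : ∀ i, 1 ≤ s i) (i : Fin m) :
    cLtF s i < cLeF s i := by
  rw [cLeF_eq]; have := hs1 i; omega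

private lemma cLeF_le_cLtF {m : ℕ} (s : Fin m → ℕ) {i j : Fin m} (hij : i < j) :
    cLeF s i ≤ cLtF s j :=
  Finset.sum_le_sum_of_subset (fun x hx =>
    Finset.mem_Iio.mpr (lt_of_le_of_lt (Finset.mem_Iic.mp hx) hij))

private def blk {m : ℕ} (n : ℕ) (s : Fin m → ℕ) (i : Fin m) : Finset (Fin (n+1)) :=
  Finset.univ.filter (fun x => cLtF s i ≤ x.1 ∧ x.1 < cLeF s i)

private lemma mem_blk {m n : ℕ} (s : Fin m → ℕ) (i : Fin m) {x : Fin (n+1)} :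
    x ∈ blk n s i ↔ cLtF s i ≤ x.1 ∧ x.1 < cLeF s i := by
  simp [blk]

private lemma blk_eq_Icc {m n : ℕ} (s : Fin m → ℕ) (hs1 : ∀ i, 1 ≤ s i)
    (hsum : ∑ j, s j = n + 1) (i : Fin m) :
    blk n s i = Finset.Icc
      (⟨cLtF s i, lt_of_lt_of_le (cLtF_lt s hs1 i) ((cLeF_le s i).trans hsum.le)⟩ : Fin (n+1))
      (⟨cLeF s i - 1, by have h1 := cLtF_lt s hs1 i; have h2 := (cLeF_le s i).trans hsum.le; omega⟩ : Fin (n+1)) := by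
  ext x
  rw [mem_blk, Finset.mem_Icc]
  have h1 := cLtF_lt s hs1 i
  constructor
  · rintro ⟨h2, h3⟩
    exact ⟨h2, by rw [Fin.le_def]; simp; omega⟩
  · rintro ⟨h2, h3⟩
    rw [Fin.le_def] at h2 h3
    simp at h2 h3
    exact ⟨h2, by omega⟩

private lemma blk_card {m n : ℕ} (s : Fin m → ℕ) (hs1 : ∀ i, 1 ≤ s i)
    (hsum : ∑ j, s j = n + 1) (i : Fin m) : (blk n s i).card = s i := by
  rw [blk_eq_Icc s hs1 hsum i, Fin.card_Icc]
  have h1 := cLtF_lt s hs1 i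
  have h2 := cLeF_eq s i
  simp only []
  omega

private lemma blk_nonempty {m n : ℕ} (s : Fin m → ℕ) (hs1 : ∀ i, 1 ≤ s i)
    (hsum : ∑ j, s j = n + 1) (i : Fin m) : (blk n s i).Nonempty :=
  Finset.card_pos.mp (by rw [blk_card s hs1 hsum i]; exact hs1 i)

private lemma blk_disjoint {m n : ℕ} (s : Fin m → ℕ) {i j : Fin m} (hij : i ≠ j) :
    Disjoint (blk n s i) (blk n s j) := by
  have key : ∀ i j : Fin m, i < j → Disjoint (blk n s i) (blk n s j) := by
    intro i j hij
    rw [Finset.disjoint_left]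
    intro x hxi hxj
    rw [mem_blk] at hxi hxj
    have := cLeF_le_cLtF s hij
    omega
  rcases lt_or_gt_of_ne hij with h | h
  · exact key i j h
  · exact (key j i h).symm

private lemma blk_injective {m n : ℕ} (s : Fin m → ℕ) (hs1 : ∀ i, 1 ≤ s i)
    (hsum : ∑ j, s j = n + 1) : Function.Injective (blk n s) := by
  intro i j hij
  by_contra hne'
  have hd : Disjoint (blk n s i) (blk n s j) := blk_disjoint s hne'
  rw [hij] at hd
  exact (blk_nonempty s hs1 hsum j).ne_empty (disjoint_self.mp hd)

private lemma blk_biUnion {m n : ℕ} (s : Fin m → ℕ) (hs1 : ∀ i, 1 ≤ s i)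
    (hsum : ∑ j, s j = n + 1) :
    Finset.univ.biUnion (blk n s) = (Finset.univ : Finset (Fin (n+1))) := by
  apply Finset.eq_of_subset_of_card_le (Finset.subset_univ _)
  rw [Finset.card_biUnion (fun x _ y _ hxy => blk_disjoint s hxy)]
  rw [Finset.card_univ, Fintype.card_fin]
  calc n + 1 = ∑ j, s j := hsum.symm
  _ = ∑ j, (blk n s j).card :=
    Finset.sum_congr rfl fun i _ => (blk_card s hs1 hsum i).symm
  _ ≤ _ := le_rfl

private def intervalPartition {m : ℕ} (n : ℕ) (s : Fin m → ℕ) (hs1 : ∀ i, 1 ≤ s i)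
    (hsum : ∑ j, s j = n + 1) :
    Finpartition (Finset.univ : Finset (Fin (n+1))) where
  parts := Finset.univ.image (blk n s)
  supIndep := by
    rw [Finset.supIndep_iff_pairwiseDisjoint]
    intro x hx y hy hxy
    obtain ⟨i, _, rfl⟩ := Finset.mem_image.mp (Finset.mem_coe.mp hx)
    obtain ⟨j, _, rfl⟩ := Finset.mem_image.mp (Finset.mem_coe.mp hy)
    exact blk_disjoint s (fun h => hxy (h ▸ rfl))
  sup_parts := by
    rw [Finset.sup_image, Finset.sup_eq_biUnion]
    exact blk_biUnion s hs1 hsum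
  bot_notMem := by
    intro h
    obtain ⟨i, _, hi⟩ := Finset.mem_image.mp h
    exact (blk_nonempty s hs1 hsum i).ne_empty hi

/-- If trucks are sorted by earliest departure times (`a` monotone), then for
every partition there is a partition into intervals of consecutive indices
with the same multiset of part sizes and waiting cost no larger; hence
consecutive-block platoons minimize waiting cost among all partitions with a
given multiset of group sizes. -/
theorem consecutive_blocks_minimize_waiting {N : ℕ} (a : Fin N → ℝ)
    (ha : Monotone a) (P : Finpartition (Finset.univ : Finset (Fin N))) :
    ∃ Q : Finpartition (Finset.univ : Finset (Fin N)),
      (∀ q ∈ Q.parts, ∃ l u : Fin N, q = Finset.Icc l u) ∧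
      Q.parts.val.map Finset.card = P.parts.val.map Finset.card ∧
      waitingCost a Q ≤ waitingCost a P := by
  classical
  rcases N with _ | n
  · refine ⟨P, ?_, rfl, le_refl _⟩
    intro q hq
    exact absurd (Finset.eq_empty_of_isEmpty q) (P.nonempty_of_mem_parts hq).ne_empty
  -- N = n + 1
  have hne : ∀ p ∈ P.parts, p.Nonempty := fun p hp => P.nonempty_of_mem_parts hp
  have hkeymem : ∀ p ∈ P.parts, p.sup id ∈ p := by
    intro p hp
    have h := hne p hp
    have : p.sup id = p.max' h := by
      rw [Finset.max'_eq_sup', Finset.sup'_eq_sup]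
    rw [this]; exact p.max'_mem h
  have hkeyinj : Set.InjOn (fun p : Finset (Fin (n+1)) => p.sup id) P.parts :=
    fun p hp q hq hpq => by
      have hpq' : p.sup id = q.sup id := hpq
      exact P.eq_of_mem_parts hp hq (hkeymem p hp) (hpq' ▸ hkeymem q hq)
  have hMcard : (P.parts.image (fun p => p.sup id)).card = P.parts.card :=
    Finset.card_image_of_injOn hkeyinj
  set g := (P.parts.image (fun p => p.sup id)).orderIsoOfFin hMcard with hg
  set pt : Fin P.parts.card → Finset (Fin (n+1)) :=
    fun i => P.part (g i : Fin (n+1)) with hptdef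
  have hptmem : ∀ i, pt i ∈ P.parts := fun i => P.part_mem.mpr (Finset.mem_univ _)
  have hkeypt : ∀ i, (pt i).sup id = (g i : Fin (n+1)) := by
    intro i
    obtain ⟨p, hp, hkp⟩ := Finset.mem_image.mp (g i).2
    have h1 : (g i : Fin (n+1)) ∈ p := hkp ▸ hkeymem p hp
    have h2 : pt i = p :=
      P.eq_of_mem_parts (hptmem i) hp (P.mem_part (Finset.mem_univ _)) h1
    rw [h2, hkp]
  have hptinj : Function.Injective pt := by
    intro i j hij
    have : (g i : Fin (n+1)) = (g j : Fin (n+1)) := by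
      rw [← hkeypt i, ← hkeypt j, hij]
    exact g.injective (Subtype.coe_injective this)
  have hptimg : Finset.univ.image pt = P.parts := by
    apply Finset.eq_of_subset_of_card_le
    · intro p hp
      obtain ⟨i, _, rfl⟩ := Finset.mem_image.mp hp
      exact hptmem i
    · rw [Finset.card_image_of_injective _ hptinj, Finset.card_univ, Fintype.card_fin]
  have hs1 : ∀ i, 1 ≤ (pt i).card := fun i =>
    Finset.card_pos.mpr (hne _ (hptmem i))
  have hsum : ∑ i, (pt i).card = n + 1 := by
    have h := P.sum_card_parts
    rw [← hptimg, Finset.sum_image (fun x _ y _ h => hptinj h)] at h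
    simpa using h
  -- the key prefix-sum bound
  have hbound : ∀ i, cLeF (fun i => (pt i).card) i ≤ (g i : Fin (n+1)).1 + 1 := by
    intro i
    have hcard : cLeF (fun i => (pt i).card) i = ((Finset.Iic i).biUnion pt).card := by
      rw [Finset.card_biUnion]
      · rfl
      · intro x _ y _ hxy
        exact P.supIndep.pairwiseDisjoint (hptmem x) (hptmem y)
          (fun h => hxy (hptinj h))
    have hsub : (Finset.Iic i).biUnion pt ⊆ Finset.Iic (g i : Fin (n+1)) := by
      intro x hx
      obtain ⟨j, hj, hxj⟩ := Finset.mem_biUnion.mp hx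
      have h1 : x ≤ (pt j).sup id := Finset.le_sup (f := id) hxj
      have h2 : (g j : Fin (n+1)) ≤ (g i : Fin (n+1)) :=
        Subtype.coe_le_coe.mpr (g.monotone (Finset.mem_Iic.mp hj))
      exact Finset.mem_Iic.mpr (le_trans (hkeypt j ▸ h1) h2)
    calc cLeF (fun i => (pt i).card) i = ((Finset.Iic i).biUnion pt).card := hcard
    _ ≤ (Finset.Iic (g i : Fin (n+1))).card := Finset.card_le_card hsub
    _ = (g i : Fin (n+1)).1 + 1 := Fin.card_Iic _
  refine ⟨intervalPartition n (fun i => (pt i).card) hs1 hsum, ?_, ?_, ?_⟩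
  · -- intervals
    intro p hp
    obtain ⟨i, _, rfl⟩ := Finset.mem_image.mp hp
    exact ⟨_, _, blk_eq_Icc _ hs1 hsum i⟩
  · -- multiset of cardinalities
    have hQval : (intervalPartition n (fun i => (pt i).card) hs1 hsum).parts.val
        = Finset.univ.val.map (blk n (fun i => (pt i).card)) := by
      show (Finset.univ.image (blk n fun i => (pt i).card)).val = _
      rw [Finset.image_val, Multiset.dedup_eq_self.mpr]
      exact Multiset.Nodup.map (blk_injective _ hs1 hsum) Finset.univ.nodup
    have hPval : P.parts.val = Finset.univ.val.map pt := by
      conv_lhs => rw [← hptimg]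
      rw [Finset.image_val, Multiset.dedup_eq_self.mpr]
      exact Multiset.Nodup.map hptinj Finset.univ.nodup
    rw [hQval, hPval, Multiset.map_map, Multiset.map_map]
    exact Multiset.map_congr rfl (fun i _ => by
      simp only [Function.comp_apply]
      exact blk_card _ hs1 hsum i)
  · -- cost comparison
    rw [waitingCost_eq, waitingCost_eq]
    apply sub_le_sub_right
    have hQsum : ∑ p ∈ (intervalPartition n (fun i => (pt i).card) hs1 hsum).parts,
          (p.card : ℝ) * (if h : p.Nonempty then p.sup' h a else 0)
        = ∑ i, (((blk n (fun i => (pt i).card)) i).card : ℝ) *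
            (if h : ((blk n (fun i => (pt i).card)) i).Nonempty
              then ((blk n (fun i => (pt i).card)) i).sup' h a else 0) :=
      Finset.sum_image (fun x _ y _ h => blk_injective _ hs1 hsum h)
    have hPsum : ∑ p ∈ P.parts,
          (p.card : ℝ) * (if h : p.Nonempty then p.sup' h a else 0)
        = ∑ i, ((pt i).card : ℝ) *
            (if h : (pt i).Nonempty then (pt i).sup' h a else 0) := by
      conv_lhs => rw [← hptimg]
      exact Finset.sum_image (fun x _ y _ h => hptinj h)
    rw [hQsum, hPsum]
    apply Finset.sum_le_sum
    intro i _
    rw [blk_card _ hs1 hsum i, dif_pos (blk_nonempty _ hs1 hsum i),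
      dif_pos (hne _ (hptmem i))]
    refine mul_le_mul_of_nonneg_left ?_ (Nat.cast_nonneg _)
    calc (blk n (fun i => (pt i).card) i).sup' (blk_nonempty _ hs1 hsum i) a
        ≤ a (g i : Fin (n+1)) := by
          apply Finset.sup'_le
          intro x hx
          apply ha
          rw [mem_blk] at hx
          have hb := hbound i
          exact Fin.le_def.mpr (by omega)
    _ ≤ (pt i).sup' (hne _ (hptmem i)) a := by
          have hmem : (g i : Fin (n+1)) ∈ pt i := hkeypt i ▸ hkeymem _ (hptmem i)
          exact Finset.le_sup' a hmem
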